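/- Let n ≥ 2 and let a_1, …, a_n be real numbers, a_n ≠ 0, such that the polynomial x^n − a_1 x^{n−1} − a_2 x^{n−2} − … − a_n has n pairwise distinct complex roots. Define the sequence (P_m) by P_0 = 1, P_m = 0 for −n+1 ≤ m < 0, and P_m = a_1 P_{m−1} + a_2 P_{m−2} + … + a_n P_{m−n} for m ≥ 1. If the ratios P_m / P_{m−1} converge to a nonzero real number x as m → ∞, then x is a root of x^n = a_1 x^{n−1} + a_2 x^{n−2} + … + a_n, and |x| is strictly greater than the modulus of every other complex root of this equation. -/

import Mathlib

open Filter Finset Polynomial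

section helpers

lemma avg_pow_tendsto_zero (ζ : ℂ) (h1 : ‖ζ‖ = 1) (hne : ζ ≠ 1) :
    Tendsto (fun N : ℕ => ((N : ℂ))⁻¹ * ∑ m ∈ Finset.range N, ζ ^ m) atTop (nhds 0) := by
  have hz1 : ζ - 1 ≠ 0 := sub_ne_zero.2 hne
  have hbound : ∀ N : ℕ,
      ‖((N : ℂ))⁻¹ * ∑ m ∈ Finset.range N, ζ ^ m‖ ≤ (N : ℝ)⁻¹ * (2 / ‖ζ - 1‖) := by
    intro N
    rw [geom_sum_eq hne, norm_mul, norm_inv]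
    have h1' : ‖(N : ℂ)‖ = (N : ℝ) := by simp
    rw [h1']
    have h2 : ‖(ζ ^ N - 1) / (ζ - 1)‖ ≤ 2 / ‖ζ - 1‖ := by
      rw [norm_div]
      have h3 : ‖ζ ^ N - 1‖ ≤ 2 := by
        calc ‖ζ ^ N - 1‖ ≤ ‖ζ ^ N‖ + ‖(1:ℂ)‖ := norm_sub_le _ _
        _ = ‖ζ‖ ^ N + 1 := by simp
        _ = 2 := by rw [h1]; norm_num
      gcongr
    exact mul_le_mul_of_nonneg_left h2 (inv_nonneg.2 (Nat.cast_nonneg N))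
  apply squeeze_zero_norm hbound
  simpa using (tendsto_inv_atTop_nhds_zero_nat (𝕜 := ℝ)).mul_const (2 / ‖ζ - 1‖)

lemma unimodular_null {ι : Type*} (S : Finset ι) (w d : ι → ℂ)
    (hw : ∀ i ∈ S, ‖w i‖ = 1) (hinj : Set.InjOn w S)
    (h : Tendsto (fun m : ℕ => ∑ i ∈ S, d i * w i ^ m) atTop (nhds 0))
    {k : ι} (hk : k ∈ S) : d k = 0 := by
  classical
  have hwk : w k ≠ 0 := by
    intro h0
    have := hw k hk; rw [h0] at this; simp at this
  set c : ℂ := (w k)⁻¹ with hc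
  have habsc : ‖c‖ = 1 := by
    rw [hc, norm_inv, hw k hk]; norm_num
  have hg : Tendsto (fun m : ℕ => ∑ i ∈ S, d i * (w i * c) ^ m) atTop (nhds 0) := by
    rw [tendsto_zero_iff_norm_tendsto_zero]
    rw [tendsto_zero_iff_norm_tendsto_zero] at h
    apply h.congr
    intro m
    have heq : ∑ i ∈ S, d i * (w i * c) ^ m
        = (∑ i ∈ S, d i * w i ^ m) * c ^ m := by
      rw [Finset.sum_mul]
      exact Finset.sum_congr rfl fun i _ => by ring
    rw [heq, norm_mul]
    have : ‖c ^ m‖ = 1 := by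
      rw [norm_pow, habsc, one_pow]
    rw [this, mul_one]
  have hces := hg.cesaro_smul
  have hrw : ∀ N : ℕ, ((N:ℝ)⁻¹ • ∑ m ∈ Finset.range N, ∑ i ∈ S, d i * (w i * c) ^ m)
      = ∑ i ∈ S, d i * (((N:ℂ))⁻¹ * ∑ m ∈ Finset.range N, (w i * c) ^ m) := by
    intro N
    rw [Finset.sum_comm, Finset.smul_sum]
    refine Finset.sum_congr rfl fun i _ => ?_
    rw [Finset.smul_sum, Finset.mul_sum, Finset.mul_sum]
    refine Finset.sum_congr rfl fun m _ => ?_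
    rw [Complex.real_smul]
    push_cast
    ring
  rw [show (fun N : ℕ => ((N:ℝ)⁻¹ • ∑ m ∈ Finset.range N, ∑ i ∈ S, d i * (w i * c) ^ m))
      = fun N : ℕ => ∑ i ∈ S, d i * (((N:ℂ))⁻¹ * ∑ m ∈ Finset.range N, (w i * c) ^ m)
    from funext hrw] at hces
  have hterm : Tendsto
      (fun N : ℕ => ∑ i ∈ S, d i * (((N:ℂ))⁻¹ * ∑ m ∈ Finset.range N, (w i * c) ^ m))
      atTop (nhds (∑ i ∈ S, if i = k then d i else 0)) := by
    apply tendsto_finset_sum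
    intro i hi
    by_cases hik : i = k
    · subst hik
      simp only [if_pos rfl]
      have hone : w i * c = 1 := by
        rw [hc, mul_inv_cancel₀ hwk]
      rw [hone]
      simp only [one_pow, Finset.sum_const, Finset.card_range, nsmul_eq_mul, mul_one]
      have : Tendsto (fun N : ℕ => ((N:ℂ))⁻¹ * (N:ℂ)) atTop (nhds 1) := by
        apply Tendsto.congr' (f₁ := fun _ : ℕ => (1:ℂ))
        · filter_upwards [eventually_ge_atTop 1] with N hN
          have : (N:ℂ) ≠ 0 := Nat.cast_ne_zero.mpr (by omega)
          rw [inv_mul_cancel₀ this]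
        · exact tendsto_const_nhds
      simpa using this.const_mul (d i)
    · simp only [if_neg hik]
      have habs : ‖w i * c‖ = 1 := by
        rw [norm_mul, hw i hi, habsc, one_mul]
      have hne1 : w i * c ≠ 1 := by
        intro h1
        rw [hc, ← div_eq_mul_inv, div_eq_one_iff_eq hwk] at h1
        exact hik (hinj hi hk h1)
      have := (avg_pow_tendsto_zero _ habs hne1).const_mul (d i)
      simpa using this
  have := tendsto_nhds_unique hces hterm
  rw [Finset.sum_ite_eq' S k d, if_pos hk] at this
  exact this.symm

lemma lagrange_key {n : ℕ} (hn : 1 ≤ n) (z : Fin n → ℂ) (hz : Function.Injective z)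
    (d : ℕ) (hd : d < n) :
    ∑ i : Fin n, z i ^ d * (∏ j ∈ Finset.univ.erase i, (z i - z j))⁻¹
      = if d = n - 1 then 1 else 0 := by
  classical
  have hvs : Set.InjOn z (Finset.univ : Finset (Fin n)) := hz.injOn
  have hcard : (Finset.univ : Finset (Fin n)).card = n := by simp
  have hdeg : (X ^ d : ℂ[X]).degree < (Finset.univ : Finset (Fin n)).card := by
    rw [degree_X_pow, hcard]
    exact_mod_cast hd
  have hinterp := Lagrange.eq_interpolate hvs hdeg
  have hco := congrArg (fun p : ℂ[X] => p.coeff (n - 1)) hinterp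
  rw [coeff_X_pow] at hco
  rw [Lagrange.interpolate_apply, finset_sum_coeff] at hco
  have hbasis : ∀ i : Fin n,
      (C ((X ^ d : ℂ[X]).eval (z i)) * Lagrange.basis Finset.univ z i).coeff (n-1)
        = z i ^ d * (∏ j ∈ Finset.univ.erase i, (z i - z j))⁻¹ := by
    intro i
    rw [coeff_C_mul, eval_pow, eval_X]
    congr 1
    unfold Lagrange.basis Lagrange.basisDivisor
    rw [Finset.prod_mul_distrib, ← map_prod, coeff_C_mul]
    have hmonic : (∏ x ∈ univ.erase i, (X - C (z x)) : ℂ[X]).Monic :=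
      monic_prod_of_monic _ _ fun j _ => monic_X_sub_C (z j)
    have hnd : (∏ x ∈ univ.erase i, (X - C (z x)) : ℂ[X]).natDegree = n - 1 := by
      rw [natDegree_prod_of_monic _ _ fun j _ => monic_X_sub_C (z j)]
      simp [Finset.card_erase_of_mem, hcard]
    rw [← hnd, hmonic.coeff_natDegree, mul_one, ← Finset.prod_inv_distrib]
  rw [Finset.sum_congr rfl fun i _ => hbasis i] at hco
  rw [← hco]
  by_cases h : d = n - 1
  · rw [if_pos h, if_pos (by omega)]
  · rw [if_neg h, if_neg (by omega)]

lemma root_mem_range {n : ℕ} (b : Fin n → ℂ) (z : Fin n → ℂ)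
    (hz : Function.Injective z)
    (hroots : ∀ i, z i ^ n = ∑ j : Fin n, b j * z i ^ (n - 1 - (j : ℕ)))
    (w : ℂ) (hw : w ^ n = ∑ j : Fin n, b j * w ^ (n - 1 - (j : ℕ))) :
    ∃ i, z i = w := by
  classical
  by_contra hcon
  push_neg at hcon
  set g : ℂ[X] := ∑ j : Fin n, C (b j) * X ^ (n - 1 - (j : ℕ)) with hg
  set f : ℂ[X] := X ^ n - g with hf
  have hgdeg : g.degree < (X ^ n : ℂ[X]).degree := by
    rw [degree_X_pow]
    apply lt_of_le_of_lt (degree_sum_le _ _)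
    rw [Finset.sup_lt_iff (by exact_mod_cast WithBot.bot_lt_coe n)]
    intro j _
    apply lt_of_le_of_lt (degree_C_mul_X_pow_le _ _)
    exact_mod_cast (by omega : n - 1 - (j : ℕ) < n)
  have hfdeg : f.degree = n := by
    rw [hf, degree_sub_eq_left_of_degree_lt hgdeg, degree_X_pow]
  have hfne : f ≠ 0 := fun h0 => by
    rw [h0, degree_zero] at hfdeg
    exact (by simp : (⊥ : WithBot ℕ) ≠ n) hfdeg
  have hfnat : f.natDegree = n := natDegree_eq_of_degree_eq_some hfdeg
  have heval : ∀ v : ℂ, (v ^ n = ∑ j : Fin n, b j * v ^ (n - 1 - (j : ℕ))) → f.IsRoot v := by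
    intro v hv
    simp only [IsRoot, hf, hg, eval_sub, eval_pow, eval_X, eval_finset_sum, eval_mul, eval_C,
      sub_eq_zero]
    exact hv
  have hsub : insert w (Finset.univ.image z) ⊆ f.roots.toFinset := by
    intro v hv
    rw [Multiset.mem_toFinset, mem_roots hfne]
    rcases Finset.mem_insert.mp hv with h | h
    · exact h ▸ heval w hw
    · obtain ⟨i, _, rfl⟩ := Finset.mem_image.mp h
      exact heval _ (hroots i)
  have hcard1 : (insert w (Finset.univ.image z)).card = n + 1 := by
    rw [Finset.card_insert_of_notMem (fun h => by
      obtain ⟨i, _, hi⟩ := Finset.mem_image.mp h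
      exact hcon i hi)]
    rw [Finset.card_image_of_injective _ hz, Finset.card_univ, Fintype.card_fin]
  have : n + 1 ≤ n := by
    calc n + 1 = (insert w (Finset.univ.image z)).card := hcard1.symm
    _ ≤ f.roots.toFinset.card := Finset.card_le_card hsub
    _ ≤ Multiset.card f.roots := Multiset.toFinset_card_le _
    _ ≤ f.natDegree := f.card_roots'
    _ = n := hfnat
  omega

end helpers

/-- If the polynomial `x^n - a_1 x^{n-1} - … - a_n` (with `a_n ≠ 0`) has `n` pairwise
distinct complex roots, and the ratios `P_m / P_{m-1}` of the recurrence
`P_m = a_1 P_{m-1} + … + a_n P_{m-n}`, `P_0 = 1`, `P_m = 0` for `1-n ≤ m < 0`,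
converge to a nonzero real `x`, then `x` is a root of the equation and its modulus
strictly exceeds the modulus of every other complex root. -/
theorem limit_of_recurrent_fraction_is_dominant_root
    (n : ℕ) (hn : 2 ≤ n) (a : Fin n → ℝ)
    (ha : a ⟨n - 1, by omega⟩ ≠ 0)
    (hdistinct : ∃ z : Fin n → ℂ, Function.Injective z ∧
      ∀ i, (z i) ^ n = ∑ j : Fin n, (a j : ℂ) * (z i) ^ (n - 1 - (j : ℕ)))
    (P : ℤ → ℝ)
    (hP0 : P 0 = 1)
    (hPneg : ∀ m : ℤ, 1 - (n : ℤ) ≤ m → m < 0 → P m = 0)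
    (hPrec : ∀ m : ℤ, 1 ≤ m → P m = ∑ j : Fin n, a j * P (m - ((j : ℕ) + 1)))
    (x : ℝ) (hx : x ≠ 0)
    (hlim : Tendsto (fun m : ℕ => P ((m : ℤ) + 1) / P (m : ℤ)) atTop (nhds x)) :
    x ^ n = (∑ j : Fin n, a j * x ^ (n - 1 - (j : ℕ))) ∧
      ∀ z : ℂ, (z ^ n = ∑ j : Fin n, (a j : ℂ) * z ^ (n - 1 - (j : ℕ))) →
        z ≠ (x : ℂ) → ‖z‖ < |x| := by
  classical
  obtain ⟨z, hzinj, hzroot⟩ := hdistinct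
  -- roots are nonzero
  have hzne : ∀ i, z i ≠ 0 := by
    intro i h0
    have h := hzroot i
    rw [h0] at h
    rw [zero_pow (by omega : n ≠ 0)] at h
    rw [Finset.sum_eq_single (⟨n-1, by omega⟩ : Fin n)] at h
    · simp only at h
      rw [show n - 1 - ((⟨n-1, by omega⟩ : Fin n) : ℕ) = 0 by simp, pow_zero, mul_one] at h
      exact ha (by exact_mod_cast h.symm)
    · intro j _ hj
      have hjlt : (j : ℕ) < n := j.isLt
      have : n - 1 - (j : ℕ) ≠ 0 := by
        intro hc
        apply hj
        apply Fin.ext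
        simp only
        omega
      rw [zero_pow this, mul_zero]
    · intro h'
      exact absurd (Finset.mem_univ _) h'
  -- eventual nonvanishing
  have hev : ∀ᶠ m : ℕ in atTop, P (m : ℤ) ≠ 0 := by
    filter_upwards [hlim.eventually_ne hx] with m hm
    intro h0
    rw [h0, div_zero] at hm
    exact hm rfl
  -- limits of ratios at distance k
  have hratk : ∀ k : ℕ, Tendsto (fun m : ℕ => P ((m:ℤ) + k) / P (m:ℤ)) atTop (nhds (x ^ k)) := by
    intro k
    induction k with
    | zero =>
      rw [pow_zero]
      apply Tendsto.congr' _ tendsto_const_nhds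
      filter_upwards [hev] with m hm
      simp [div_self hm]
    | succ k ih =>
      have hshift : Tendsto (fun m : ℕ => P ((m:ℤ) + k + 1) / P ((m:ℤ) + k)) atTop (nhds x) := by
        have h := hlim.comp (tendsto_add_atTop_nat k)
        apply h.congr
        intro m
        simp only [Function.comp]
        push_cast
        ring_nf
      have hevk : ∀ᶠ m : ℕ in atTop, P ((m:ℤ) + k) ≠ 0 := by
        have := (tendsto_add_atTop_nat k).eventually hev
        apply this.mono
        intro m hm
        push_cast at hm
        exact hm
      have hmul := hshift.mul ih
      rw [show x * x ^ k = x ^ (k+1) by ring] at hmul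
      apply Tendsto.congr' _ hmul
      filter_upwards [hevk] with m hm
      have : ((k:ℤ)+1) = ((k+1 : ℕ) : ℤ) := by push_cast; ring
      rw [div_mul_div_comm]
      rw [mul_comm (P ((m:ℤ)+k+1)) (P ((m:ℤ)+k))]
      rw [mul_div_mul_left _ _ hm,
        show ((m:ℤ) + ((k+1:ℕ):ℤ)) = (m:ℤ) + (k:ℤ) + 1 by push_cast; ring]
  -- x is a root of the characteristic equation
  have hxroot : x ^ n = ∑ j : Fin n, a j * x ^ (n - 1 - (j : ℕ)) := by
    have h1 := hratk n
    have h2 : Tendsto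
        (fun m : ℕ => ∑ j : Fin n, a j * (P ((m:ℤ) + ((n - 1 - (j:ℕ) : ℕ) : ℤ)) / P (m:ℤ)))
        atTop (nhds (∑ j : Fin n, a j * x ^ (n - 1 - (j:ℕ)))) :=
      tendsto_finset_sum _ fun j _ => (hratk _).const_mul (a j)
    have heq : ∀ m : ℕ, P ((m:ℤ) + n) / P (m:ℤ)
        = ∑ j : Fin n, a j * (P ((m:ℤ) + ((n - 1 - (j:ℕ) : ℕ) : ℤ)) / P (m:ℤ)) := by
      intro m
      rw [hPrec ((m:ℤ) + n) (by omega), Finset.sum_div]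
      refine Finset.sum_congr rfl fun j _ => ?_
      rw [mul_div_assoc]
      have hj : (j : ℕ) < n := j.isLt
      have he : (m:ℤ) + (n:ℤ) - ((j:ℕ)+1) = (m:ℤ) + ((n - 1 - (j:ℕ) : ℕ) : ℤ) := by omega
      rw [he]
    exact tendsto_nhds_unique (h1.congr heq) h2
  refine ⟨hxroot, ?_⟩
  have hxrootC : (x:ℂ) ^ n = ∑ j : Fin n, (a j : ℂ) * (x:ℂ) ^ (n - 1 - (j:ℕ)) := by
    exact_mod_cast congrArg (fun t : ℝ => (t : ℂ)) hxroot
  obtain ⟨i0, hi0⟩ := root_mem_range _ z hzinj hzroot _ hxrootC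
  -- the coefficients of the explicit solution
  set c : Fin n → ℂ := fun i => z i ^ (n - 1) * (∏ j ∈ Finset.univ.erase i, (z i - z j))⁻¹
    with hcdef
  have hprodne : ∀ i, (∏ j ∈ Finset.univ.erase i, (z i - z j)) ≠ 0 := by
    intro i
    apply Finset.prod_ne_zero_iff.mpr
    intro j hj
    rw [sub_ne_zero]
    exact fun h => (Finset.mem_erase.mp hj).1.symm (hzinj h)
  have hcne : ∀ i, c i ≠ 0 := by
    intro i
    apply mul_ne_zero (pow_ne_zero _ (hzne i)) (inv_ne_zero (hprodne i))
  have hkey : ∀ k : ℕ, k < n → ∑ i, c i * (z i) ^ (-(k:ℤ)) = if k = 0 then 1 else 0 := by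
    intro k hk
    have hlg := lagrange_key (by omega) z hzinj (n - 1 - k) (by omega)
    have hterm : ∀ i, c i * z i ^ (-(k:ℤ))
        = z i ^ (n - 1 - k) * (∏ j ∈ Finset.univ.erase i, (z i - z j))⁻¹ := by
      intro i
      rw [hcdef]
      simp only
      rw [mul_right_comm]
      congr 1
      rw [← zpow_natCast (z i) (n-1), ← zpow_natCast (z i) (n-1-k), ← zpow_add₀ (hzne i)]
      congr 1
      omega
    rw [Finset.sum_congr rfl fun i _ => hterm i, hlg]
    by_cases h : k = 0
    · rw [if_pos (by omega), if_pos h]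
    · rw [if_neg (by omega), if_neg h]
  -- the explicit formula for P
  have hform : ∀ m : ℤ, 1 - (n:ℤ) ≤ m → (P m : ℂ) = ∑ i, c i * z i ^ m := by
    have key : ∀ k : ℕ, (P (1 - (n:ℤ) + k) : ℂ) = ∑ i, c i * z i ^ (1 - (n:ℤ) + k) := by
      intro k
      induction k using Nat.strong_induction_on with
      | _ k ih =>
      by_cases hkn : k < n
      · by_cases hk0 : k = n - 1
        · have hm : 1 - (n:ℤ) + k = 0 := by omega
          rw [hm, hP0]
          have h0 := hkey 0 (by omega)
          simp only [Nat.cast_zero, neg_zero, zpow_zero] at h0 ⊢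
          rw [h0]
          norm_num
        · have hm : 1 - (n:ℤ) + k = -(((n - 1 - k : ℕ)) : ℤ) := by omega
          rw [hm, hPneg _ (by omega) (by omega)]
          have h0 := hkey (n - 1 - k) (by omega)
          rw [if_neg (by omega)] at h0
          rw [Complex.ofReal_zero]
          exact h0.symm
      · push_neg at hkn
        have hm1 : (1:ℤ) ≤ 1 - (n:ℤ) + k := by omega
        rw [hPrec _ hm1]
        push_cast
        have hterm : ∀ j : Fin n, (P (1 - (n:ℤ) + k - ((j:ℕ)+1)) : ℂ)
            = ∑ i, c i * z i ^ (1 - (n:ℤ) + k - ((j:ℕ)+1)) := by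
          intro j
          have hj : (j:ℕ) < n := j.isLt
          have he : (1:ℤ) - n + k - ((j:ℕ)+1) = 1 - (n:ℤ) + ((k - ((j:ℕ)+1) : ℕ) : ℤ) := by
            omega
          rw [he]
          exact ih _ (by omega)
        rw [Finset.sum_congr rfl fun j _ => by rw [hterm j]]
        rw [Finset.sum_congr rfl fun j (_ : j ∈ Finset.univ) => Finset.mul_sum _ _ _]
        rw [Finset.sum_comm]
        refine Finset.sum_congr rfl fun i _ => ?_
        have hz0 := hzne i
        have hsplit : ∀ j : Fin n, (z i) ^ (1 - (n:ℤ) + k - ((j:ℕ)+1))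
            = z i ^ (1 - (n:ℤ) + k - n) * z i ^ ((n - 1 - (j:ℕ) : ℕ)) := by
          intro j
          have hj : (j:ℕ) < n := j.isLt
          rw [← zpow_natCast (z i) (n - 1 - (j:ℕ)), ← zpow_add₀ hz0]
          congr 1
          omega
        rw [Finset.sum_congr rfl fun j _ => by rw [hsplit j]]
        have : ∑ j : Fin n, (a j : ℂ) * (c i * (z i ^ (1 - (n:ℤ) + k - n) * z i ^ ((n - 1 - (j:ℕ) : ℕ))))
            = (c i * z i ^ (1 - (n:ℤ) + k - n)) * ∑ j : Fin n, (a j : ℂ) * z i ^ ((n - 1 - (j:ℕ) : ℕ)) := by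
          rw [Finset.mul_sum]
          exact Finset.sum_congr rfl fun j _ => by ring
        rw [this, ← hzroot i]
        rw [← zpow_natCast (z i) n, mul_assoc, ← zpow_add₀ hz0]
        congr 2
        omega
    intro m hm
    obtain ⟨k, hk⟩ : ∃ k : ℕ, m = 1 - (n:ℤ) + k := ⟨(m - (1 - n)).toNat, by omega⟩
    rw [hk]
    exact key k
  -- reduce to statement about the z i
  suffices hlt : ∀ i, z i ≠ (x:ℂ) → ‖z i‖ < |x| by
    intro w hw hwx
    obtain ⟨i, rfl⟩ := root_mem_range _ z hzinj hzroot _ hw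
    exact hlt i hwx
  by_contra hcon
  push_neg at hcon
  obtain ⟨i1, hi1ne, hi1ge⟩ := hcon
  have hnonempty : (Finset.univ : Finset (Fin n)).Nonempty := ⟨i0, Finset.mem_univ _⟩
  set r : ℝ := Finset.univ.sup' hnonempty (fun i => ‖z i‖) with hrdef
  have hler : ∀ i, ‖z i‖ ≤ r := fun i => Finset.le_sup' (fun i => ‖z i‖) (Finset.mem_univ i)
  have hxr : |x| ≤ r := le_trans hi1ge (hler i1)
  have hrpos : (0:ℝ) < r := lt_of_lt_of_le (abs_pos.mpr hx) hxr
  have hrne : ((r:ℝ):ℂ) ≠ 0 := by exact_mod_cast hrpos.ne'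
  set w : Fin n → ℂ := fun i => z i / (r:ℂ) with hwdef
  have hwabs : ∀ i, ‖w i‖ = ‖z i‖ / r := by
    intro i
    rw [hwdef]
    simp only [norm_div, Complex.norm_real, Real.norm_eq_abs, abs_of_pos hrpos]
  have hwle : ∀ i, ‖w i‖ ≤ 1 := by
    intro i
    rw [hwabs]
    exact div_le_one_of_le₀ (hler i) hrpos.le
  set u : ℕ → ℂ := fun m => (P (m:ℤ) : ℂ) / (r:ℂ)^m with hudef
  have hu : ∀ m : ℕ, u m = ∑ i, c i * w i ^ m := by
    intro m
    rw [hudef]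
    simp only
    rw [hform (m:ℤ) (by omega), Finset.sum_div]
    refine Finset.sum_congr rfl fun i _ => ?_
    rw [zpow_natCast, mul_div_assoc, hwdef]
    simp only
    rw [div_pow]
  set S : Finset (Fin n) := Finset.univ.filter (fun i => ‖z i‖ = r) with hSdef
  have hwS : ∀ i ∈ S, ‖w i‖ = 1 := by
    intro i hi
    rw [hwabs, (Finset.mem_filter.mp hi).2, div_self hrpos.ne']
  have hwinj : Set.InjOn w (S : Set (Fin n)) := by
    intro i _ j _ hij
    apply hzinj
    rw [hwdef] at hij
    simp only at hij
    rw [div_eq_div_iff hrne hrne] at hij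
    exact mul_right_cancel₀ hrne hij
  set T : ℕ → ℂ := fun m => ∑ i ∈ S, c i * w i ^ m with hTdef
  set E : ℕ → ℂ := fun m =>
    ∑ i ∈ Finset.univ.filter (fun i => ¬ ‖z i‖ = r), c i * w i ^ m with hEdef
  have huTE : ∀ m, u m = T m + E m := by
    intro m
    rw [hu m, hTdef, hEdef, hSdef]
    exact (Finset.sum_filter_add_sum_filter_not _ _ _).symm
  have hElim : Tendsto E atTop (nhds 0) := by
    have h0 : Tendsto (fun m : ℕ =>
        ∑ i ∈ Finset.univ.filter (fun i => ¬ ‖z i‖ = r), c i * w i ^ m)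
        atTop (nhds (∑ i ∈ Finset.univ.filter (fun i => ¬ ‖z i‖ = r), (0:ℂ))) := by
      apply tendsto_finset_sum
      intro i hi
      have hil : ‖w i‖ < 1 := by
        rw [hwabs]
        rw [div_lt_one hrpos]
        exact lt_of_le_of_ne (hler i) ((Finset.mem_filter.mp hi).2)
      simpa using (tendsto_pow_atTop_nhds_zero_of_norm_lt_one hil).const_mul (c i)
    simpa using h0
  have hune : ∀ᶠ m : ℕ in atTop, u m ≠ 0 := by
    filter_upwards [hev] with m hm
    exact div_ne_zero (by exact_mod_cast hm) (pow_ne_zero _ hrne)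
  have huratio : Tendsto (fun m => u (m+1) / u m) atTop (nhds ((x:ℂ)/(r:ℂ))) := by
    have hbase : Tendsto (fun m : ℕ => ((P ((m:ℤ)+1) / P (m:ℤ) : ℝ) : ℂ) / (r:ℂ))
        atTop (nhds ((x:ℂ)/(r:ℂ))) :=
      ((Complex.continuous_ofReal.tendsto x).comp hlim).div_const _
    apply Tendsto.congr' _ hbase
    filter_upwards [hev] with m hm
    have hPm : ((P (m:ℤ) : ℝ) : ℂ) ≠ 0 := by exact_mod_cast hm
    rw [hudef]
    simp only
    push_cast
    rw [div_div_div_eq, pow_succ]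
    field_simp
  rcases eq_or_lt_of_le hxr with hxr_eq | hxr_lt
  · -- |x| = r : the dominant circle contains x and another root
    set μ : ℂ := (x:ℂ) / (r:ℂ) with hμdef
    have hμw : μ = w i0 := by rw [hwdef]; simp only; rw [hi0]
    have hxx : x * x = r * r := by
      have h1 : x * x = |x| * |x| := (abs_mul_abs_self x).symm
      rw [h1, hxr_eq]
    have hμsq : μ * μ = 1 := by
      rw [hμdef, div_mul_div_comm, div_eq_one_iff_eq (mul_ne_zero hrne hrne)]
      exact_mod_cast hxx
    have hμabs : ‖μ‖ = 1 := by
      rw [hμdef, norm_div, Complex.norm_real, Complex.norm_real, Real.norm_eq_abs,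
        Real.norm_eq_abs, hxr_eq,
        abs_of_pos hrpos, div_self hrpos.ne']
    have hi1S : i1 ∈ S := by
      rw [hSdef]
      exact Finset.mem_filter.mpr ⟨Finset.mem_univ _,
        le_antisymm (hler i1) (hxr_eq ▸ hi1ge)⟩
    have hubound : ∀ m : ℕ, ‖u m‖ ≤ ∑ i, ‖c i‖ := by
      intro m
      rw [hu m]
      refine le_trans (norm_sum_le _ _) (Finset.sum_le_sum fun i _ => ?_)
      rw [norm_mul, norm_pow]
      calc ‖c i‖ * ‖w i‖ ^ m
          ≤ ‖c i‖ * 1 := by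
            gcongr
            exact pow_le_one₀ (norm_nonneg _) (hwle i)
      _ = ‖c i‖ := mul_one _
    have hδ : Tendsto (fun m => (u (m+1) / u m) * μ - 1) atTop (nhds 0) := by
      have h1 := huratio.mul_const μ
      have h2 : ((x:ℂ)/(r:ℂ)) * μ = 1 := by rw [← hμdef]; exact hμsq
      rw [h2] at h1
      simpa using h1.sub_const 1
    have hvdiff : Tendsto (fun m => u (m+1) * μ^(m+1) - u m * μ^m) atTop (nhds 0) := by
      apply squeeze_zero_norm'
        (a := fun m => (∑ i, ‖c i‖) * ‖(u (m+1) / u m) * μ - 1‖)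
      · filter_upwards [hune] with m hm
        have heq : u (m+1) * μ^(m+1) - u m * μ^m
            = μ^m * u m * ((u (m+1)/u m) * μ - 1) := by
          field_simp
          ring
        rw [heq, norm_mul, norm_mul, norm_pow, hμabs, one_pow, one_mul]
        exact mul_le_mul_of_nonneg_right (hubound m) (norm_nonneg _)
      · have h1 : Tendsto (fun m => ‖(u (m+1) / u m) * μ - 1‖) atTop (nhds 0) := by
          rw [← norm_zero (E := ℂ)]
          exact (continuous_norm.tendsto 0).comp hδ
        simpa using h1.const_mul (∑ i, ‖c i‖)
    have hEμ : Tendsto (fun m => E m * μ^m) atTop (nhds 0) := by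
      rw [tendsto_zero_iff_norm_tendsto_zero] at hElim ⊢
      apply hElim.congr
      intro m
      rw [norm_mul, norm_pow, hμabs, one_pow, mul_one]
    have hEμdiff : Tendsto (fun m => E (m+1) * μ^(m+1) - E m * μ^m) atTop (nhds 0) := by
      have h1 : Tendsto (fun m => E (m+1) * μ^(m+1)) atTop (nhds 0) :=
        hEμ.comp (tendsto_add_atTop_nat 1)
      simpa using h1.sub hEμ
    have hvm : ∀ m : ℕ, u m * μ^m = (∑ i ∈ S, c i * (w i * μ)^m) + E m * μ^m := by
      intro m
      rw [huTE m, add_mul]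
      congr 1
      rw [hTdef]
      simp only
      rw [Finset.sum_mul]
      exact Finset.sum_congr rfl fun i _ => by rw [mul_pow]; ring
    have hfinal : Tendsto (fun m => ∑ i ∈ S, (c i * (w i * μ - 1)) * (w i * μ)^m)
        atTop (nhds 0) := by
      have h1 := hvdiff.sub hEμdiff
      rw [sub_zero] at h1
      apply Tendsto.congr _ h1
      intro m
      rw [hvm (m+1), hvm m]
      have h2 : ∑ i ∈ S, (c i * (w i * μ - 1)) * (w i * μ)^m
          = ∑ i ∈ S, (c i * (w i * μ)^(m+1) - c i * (w i * μ)^m) := by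
        refine Finset.sum_congr rfl fun i _ => ?_
        rw [pow_succ]
        ring
      rw [h2, Finset.sum_sub_distrib]
      ring
    have hz1 := unimodular_null S (fun i => w i * μ) (fun i => c i * (w i * μ - 1))
      (fun i hi => by rw [norm_mul, hwS i hi, hμabs, one_mul])
      (fun i hi j hj hij => by
        apply hwinj hi hj
        exact mul_right_cancel₀ (fun h0 => by rw [h0] at hμabs; simp at hμabs) hij)
      hfinal hi1S
    have hw1 : w i1 * μ = 1 := by
      rcases mul_eq_zero.mp hz1 with h | h
      · exact absurd h (hcne i1)
      · rwa [sub_eq_zero] at h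
    have hww : w i1 = w i0 := by
      have h3 : w i1 = (w i1 * μ) * μ := by rw [mul_assoc, hμsq, mul_one]
      rw [hw1, one_mul] at h3
      rw [h3, hμw]
    have : z i1 = z i0 := by
      rw [hwdef] at hww
      simp only at hww
      rw [div_eq_div_iff hrne hrne] at hww
      exact mul_right_cancel₀ hrne hww
    rw [hi0] at this
    exact hi1ne this
  · -- |x| < r : the sequence u tends to zero, contradiction
    have hnormratio : Tendsto (fun m => ‖u (m+1)‖ / ‖u m‖) atTop (nhds (|x| / r)) := by
      have h1 : Tendsto (fun m => ‖u (m+1) / u m‖) atTop (nhds ‖(x:ℂ)/(r:ℂ)‖) :=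
        (continuous_norm.tendsto _).comp huratio
      have h2 : ‖(x:ℂ)/(r:ℂ)‖ = |x| / r := by
        rw [norm_div, Complex.norm_real, Complex.norm_real, Real.norm_eq_abs,
          Real.norm_eq_abs, abs_of_pos hrpos]
      rw [h2] at h1
      apply h1.congr
      intro m
      rw [norm_div]
    have hsum := summable_of_ratio_test_tendsto_lt_one
      (by rw [div_lt_one hrpos]; exact hxr_lt) hune hnormratio
    have hu0 := hsum.tendsto_atTop_zero
    have hT0 : Tendsto T atTop (nhds 0) := by
      have h1 := hu0.sub hElim
      rw [sub_zero] at h1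
      apply Tendsto.congr _ h1
      intro m
      rw [huTE m]
      ring
    obtain ⟨imax, -, himax⟩ := Finset.exists_mem_eq_sup' hnonempty (fun i => ‖z i‖)
    have himaxS : imax ∈ S := by
      rw [hSdef]
      exact Finset.mem_filter.mpr ⟨Finset.mem_univ _, himax.symm⟩
    exact hcne imax (unimodular_null S w c hwS hwinj hT0 himaxS)
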